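/- (Scalar case p = 1 of Theorem 2.1, k = 2.) Let (X₁, X₂) be random variables on (0,∞)² with joint density proportional to x₁^{α₁−1} x₂^{α₂−1} (1+x₂)^{β₁} (1+x₁+x₂)^{−(α₁+α₂+α₃+β₁+β₂)}. Then Y₁ = X₁/(1+X₁+X₂) and Y₂ = X₂/(1+X₂) are independent, Y₁ ~ Beta(α₁, α₂+α₃+β₁+β₂) and Y₂ ~ Beta(α₂, α₃+β₂). -/

import Mathlib

open MeasureTheory Real Set

lemma beta_lintegral {a b : ℝ} (ha : 0 < a) (hb : 0 < b) :
    ∫⁻ y in Ioo (0:ℝ) 1, ENNReal.ofReal (y ^ (a-1) * (1-y) ^ (b-1)) =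
      ENNReal.ofReal (Gamma a * Gamma b / Gamma (a+b)) := by
  have hC : ∀ x ∈ uIoc (0:ℝ) 1, ((x:ℂ) ^ ((a:ℂ)-1) * ((1:ℂ)-x) ^ ((b:ℂ)-1)) =
      ((x ^ (a-1) * (1-x) ^ (b-1) : ℝ) : ℂ) := by
    intro x hx
    rw [uIoc_of_le (by norm_num)] at hx
    rw [show ((a:ℂ)-1) = ((a-1 : ℝ):ℂ) by push_cast; ring,
      show ((b:ℂ)-1) = ((b-1:ℝ):ℂ) by push_cast; ring,
      show ((1:ℂ) - (x:ℂ)) = ((1-x : ℝ):ℂ) by push_cast; ring,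
      ← Complex.ofReal_cpow hx.1.le, ← Complex.ofReal_cpow (by linarith [hx.2]),
      ← Complex.ofReal_mul]
  have hInt : IntervalIntegrable (fun x : ℝ => (x:ℂ) ^ ((a:ℂ)-1) * ((1:ℂ)-x) ^ ((b:ℂ)-1))
      volume 0 1 := Complex.betaIntegral_convergent (by simpa using ha) (by simpa using hb)
  have hIntR : IntervalIntegrable (fun x : ℝ => x ^ (a-1) * (1-x) ^ (b-1)) volume 0 1 := by
    rw [intervalIntegrable_iff] at hInt ⊢
    have h2 := hInt.congr_fun hC measurableSet_uIoc
    simpa [IntegrableOn] using h2.re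
  have hval : (∫ x in (0:ℝ)..1, x ^ (a-1) * (1-x) ^ (b-1)) = Gamma a * Gamma b / Gamma (a+b) := by
    have h0 := Complex.Gamma_mul_Gamma_eq_betaIntegral (s := a) (t := b)
      (by simpa using ha) (by simpa using hb)
    rw [show ((a:ℂ)+(b:ℂ)) = ((a+b:ℝ):ℂ) by push_cast; ring, Complex.Gamma_ofReal,
      Complex.Gamma_ofReal, Complex.Gamma_ofReal] at h0
    have hG' : ((Gamma (a+b) : ℝ) : ℂ) ≠ 0 := by
      exact_mod_cast (Gamma_pos_of_pos (by linarith : (0:ℝ) < a + b)).ne'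
    have h1 : Complex.betaIntegral a b = ((Gamma a * Gamma b / Gamma (a+b) : ℝ) : ℂ) := by
      push_cast
      rw [eq_div_iff hG', mul_comm, ← h0]
    have h2 : Complex.betaIntegral a b =
        ((∫ x in (0:ℝ)..1, x ^ (a-1) * (1-x) ^ (b-1) : ℝ) : ℂ) := by
      rw [Complex.betaIntegral,
        intervalIntegral.integral_congr_ae (MeasureTheory.ae_of_all _ hC)]
      exact intervalIntegral.integral_ofReal
    rw [h2] at h1
    exact_mod_cast h1
  rw [← hval, intervalIntegral.integral_of_le (by norm_num : (0:ℝ) ≤ 1),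
    MeasureTheory.integral_Ioc_eq_integral_Ioo,
    ← ofReal_integral_eq_lintegral_ofReal
      (hIntR.1.mono_set Ioo_subset_Ioc_self)]
  filter_upwards [self_mem_ae_restrict (measurableSet_Ioo : MeasurableSet (Ioo (0:ℝ) 1))]
    with x hx
  exact mul_nonneg (rpow_nonneg hx.1.le _) (rpow_nonneg (by linarith [hx.2]) _)

lemma subst_lemma {a b k : ℝ} (hk : 0 < k) {s : Set ℝ} (hs : MeasurableSet s) :
    ∫⁻ x in Ioi 0 ∩ (fun x => x / (k + x)) ⁻¹' s,
        ENNReal.ofReal (x ^ (a-1) * (k + x) ^ (-(a+b))) =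
      ENNReal.ofReal (k ^ (-b)) *
        ∫⁻ y in Ioo 0 1 ∩ s, ENNReal.ofReal (y ^ (a-1) * (1-y) ^ (b-1)) := by
  set h : ℝ → ℝ := fun y => k * y / (1 - y) with hh
  have hmem : ∀ y ∈ Ioo (0:ℝ) 1 ∩ s, 0 < h y ∧ h y / (k + h y) = y := by
    intro y hy
    obtain ⟨⟨hy0, hy1⟩, -⟩ := hy
    have h1 : (1:ℝ) - y ≠ 0 := by linarith
    have hsum : k + h y = k / (1 - y) := by rw [hh]; field_simp; ring
    refine ⟨div_pos (by positivity) (by linarith), ?_⟩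
    rw [hsum, hh]
    field_simp
  have himg : h '' (Ioo 0 1 ∩ s) = Ioi 0 ∩ (fun x => x / (k + x)) ⁻¹' s := by
    ext x
    constructor
    · rintro ⟨y, hy, rfl⟩
      obtain ⟨hpos, hinv⟩ := hmem y hy
      exact ⟨hpos, by rw [Set.mem_preimage, hinv]; exact hy.2⟩
    · rintro ⟨hx, hxs⟩
      have hx0 : (0:ℝ) < x := hx
      have hkx : (0:ℝ) < k + x := by linarith
      refine ⟨x / (k + x), ⟨⟨div_pos hx0 hkx, (div_lt_one hkx).mpr (by linarith)⟩, hxs⟩, ?_⟩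
      show k * (x / (k + x)) / (1 - x / (k + x)) = x
      have h2 : (1:ℝ) - x / (k + x) = k / (k + x) := by field_simp; ring
      rw [h2]
      field_simp
  have hinj : InjOn h (Ioo 0 1 ∩ s) := by
    intro y1 h1 y2 h2 he
    have := (hmem y1 h1).2
    rw [he, (hmem y2 h2).2] at this
    exact this.symm
  have hms : MeasurableSet (Ioo (0:ℝ) 1 ∩ s) := measurableSet_Ioo.inter hs
  have hderiv : ∀ y ∈ Ioo (0:ℝ) 1 ∩ s,
      HasDerivWithinAt h (k / (1 - y)^2) (Ioo 0 1 ∩ s) y := by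
    intro y hy
    have hy1 : (1:ℝ) - y ≠ 0 := by have := hy.1.2; intro hc; linarith
    have hd1 : HasDerivAt (fun y : ℝ => 1 - y) (-1) y := by
      simpa using (hasDerivAt_id' y).const_sub (1:ℝ)
    have hd2 : HasDerivAt (fun y : ℝ => k * y) k y := by
      simpa using (hasDerivAt_id y).const_mul k
    have hd := hd2.div hd1 hy1
    have : HasDerivAt h (k / (1-y)^2) y := by
      refine hd.congr_deriv ?_
      ring
    exact this.hasDerivWithinAt
  have key := lintegral_image_eq_lintegral_abs_det_fderiv_mul volume hms
    (f' := fun y => (1 : ℝ →L[ℝ] ℝ).smulRight (k / (1 - y)^2))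
    (fun y hy => (hderiv y hy).hasFDerivWithinAt) hinj
    (fun x => ENNReal.ofReal (x ^ (a-1) * (k + x) ^ (-(a+b))))
  rw [himg] at key
  rw [key]
  simp only [ContinuousLinearMap.smulRight_one_eq_toSpanSingleton, ContinuousLinearMap.det_toSpanSingleton]
  rw [← lintegral_const_mul' _ _ ENNReal.ofReal_ne_top]
  apply setLIntegral_congr_fun hms
  intro y hy
  beta_reduce
  obtain ⟨⟨hy0, hy1⟩, -⟩ := hy
  have hu : (0:ℝ) < 1 - y := by linarith
  have hsum : k + h y = k / (1 - y) := by rw [hh]; field_simp; ring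
  rw [hsum]
  show ENNReal.ofReal |k / (1-y)^2| * ENNReal.ofReal ((k * y / (1-y)) ^ (a-1) * (k / (1-y)) ^ (-(a+b)))
      = ENNReal.ofReal (k ^ (-b)) * ENNReal.ofReal (y ^ (a-1) * (1-y) ^ (b-1))
  rw [abs_of_pos (by positivity), ← ENNReal.ofReal_mul (by positivity),
    ← ENNReal.ofReal_mul (by positivity)]
  congr 1
  have hu2 : (0:ℝ) < 1 - y := hu
  set u := 1 - y
  set K := Real.log k
  set L := Real.log u
  set Y := Real.log y
  have e1 : k / u^2 = exp (K - 2*L) := by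
    rw [Real.exp_sub, Real.exp_log hk, two_mul, Real.exp_add, Real.exp_log hu2, pow_two]
  have e2 : (k*y/u) ^ (a-1) = exp ((K + Y - L)*(a-1)) := by
    rw [Real.rpow_def_of_pos (by positivity), Real.log_div (by positivity) hu2.ne',
      Real.log_mul hk.ne' hy0.ne']
  have e3 : (k/u) ^ (-(a+b)) = exp ((K - L)*(-(a+b))) := by
    rw [Real.rpow_def_of_pos (by positivity), Real.log_div hk.ne' hu2.ne']
  have hL : k / u^2 * ((k*y/u) ^ (a-1) * (k/u) ^ (-(a+b))) =
      exp ((K - 2*L) + ((K + Y - L)*(a-1) + (K - L)*(-(a+b)))) := by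
    rw [e1, e2, e3, ← Real.exp_add, ← Real.exp_add]
  have hR : k ^ (-b) * (y ^ (a-1) * u ^ (b-1)) = exp (K * (-b) + (Y*(a-1) + L*(b-1))) := by
    rw [Real.exp_add, Real.exp_add, Real.rpow_def_of_pos hk, Real.rpow_def_of_pos hy0,
      Real.rpow_def_of_pos hu2]
  rw [hL, hR]
  congr 1
  ring

/-- The Beta(a,b) distribution on (0,1). -/
noncomputable def betaMeasure (a b : ℝ) : Measure ℝ :=
  volume.withDensity fun y => ENNReal.ofReal
    ((Ioo (0 : ℝ) 1).indicator
      (fun y => y ^ (a - 1) * (1 - y) ^ (b - 1) / (Gamma a * Gamma b / Gamma (a + b))) y)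

lemma betaMeasure_apply {a b : ℝ} (ha : 0 < a) (hb : 0 < b) {s : Set ℝ} (hs : MeasurableSet s) :
    betaMeasure a b s = ENNReal.ofReal (Gamma a * Gamma b / Gamma (a+b))⁻¹ *
      ∫⁻ y in Ioo 0 1 ∩ s, ENNReal.ofReal (y ^ (a-1) * (1-y) ^ (b-1)) := by
  rw [betaMeasure, withDensity_apply _ hs]
  have h1 : (fun y => ENNReal.ofReal ((Ioo (0:ℝ) 1).indicator
      (fun y => y ^ (a-1) * (1-y) ^ (b-1) / (Gamma a * Gamma b / Gamma (a+b))) y)) =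
      (Ioo (0:ℝ) 1).indicator (fun y => ENNReal.ofReal
        (y ^ (a-1) * (1-y) ^ (b-1) / (Gamma a * Gamma b / Gamma (a+b)))) := by
    funext y
    rw [Set.indicator_apply, Set.indicator_apply]
    split_ifs <;> simp
  rw [lintegral_congr (fun y => congrFun h1 y), lintegral_indicator measurableSet_Ioo _,
    Measure.restrict_restrict measurableSet_Ioo,
    ← lintegral_const_mul' _ _ ENNReal.ofReal_ne_top]
  apply setLIntegral_congr_fun (measurableSet_Ioo.inter hs)
  intro y hy
  beta_reduce
  obtain ⟨⟨hy0, hy1⟩, -⟩ := hy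
  have hB : (0:ℝ) < Gamma a * Gamma b / Gamma (a+b) :=
    div_pos (mul_pos (Gamma_pos_of_pos ha) (Gamma_pos_of_pos hb))
      (Gamma_pos_of_pos (by linarith))
  rw [div_eq_mul_inv, mul_comm, ENNReal.ofReal_mul (by positivity)]

lemma betaMeasure_isFinite {a b : ℝ} (ha : 0 < a) (hb : 0 < b) :
    IsFiniteMeasure (betaMeasure a b) := by
  constructor
  rw [betaMeasure_apply ha hb MeasurableSet.univ, inter_univ, beta_lintegral ha hb]
  exact ENNReal.mul_lt_top ENNReal.ofReal_lt_top ENNReal.ofReal_lt_top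

/-- Scalar case (p = 1, k = 2) of Theorem 2.1: if `(X₁, X₂)` has joint density
proportional to `x₁^{α₁−1} x₂^{α₂−1} (1+x₂)^{β₁} (1+x₁+x₂)^{−(α₁+α₂+α₃+β₁+β₂)}` on
`(0,∞)²`, then `Y₁ = X₁/(1+X₁+X₂)` and `Y₂ = X₂/(1+X₂)` are independent with
`Y₁ ~ Beta(α₁, α₂+α₃+β₁+β₂)` and `Y₂ ~ Beta(α₂, α₃+β₂)`. -/
theorem type2_dirichlet_to_beta_indep {α₁ α₂ α₃ β₁ β₂ c : ℝ}
    (h₁ : 0 < α₁) (h₂ : 0 < α₂) (h₃ : 0 < α₂ + α₃ + β₁ + β₂) (h₄ : 0 < α₃ + β₂)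
    (hc : 0 < c) (μ : Measure (ℝ × ℝ))
    (hμ : μ = volume.withDensity fun x => ENNReal.ofReal
      ((Ioi (0 : ℝ) ×ˢ Ioi (0 : ℝ)).indicator
        (fun x => c * x.1 ^ (α₁ - 1) * x.2 ^ (α₂ - 1) * (1 + x.2) ^ β₁ *
          (1 + x.1 + x.2) ^ (-(α₁ + α₂ + α₃ + β₁ + β₂))) x))
    (hprob : IsProbabilityMeasure μ) :
    Measure.map (fun x : ℝ × ℝ => (x.1 / (1 + x.1 + x.2), x.2 / (1 + x.2))) μ =
      (betaMeasure α₁ (α₂ + α₃ + β₁ + β₂)).prod (betaMeasure α₂ (α₃ + β₂)) := by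
  haveI := betaMeasure_isFinite h₁ h₃
  haveI := betaMeasure_isFinite h₂ h₄
  set T : ℝ × ℝ → ℝ × ℝ := fun x => (x.1 / (1 + x.1 + x.2), x.2 / (1 + x.2)) with hTdef
  have hT : Measurable T :=
    (measurable_fst.div ((measurable_const.add measurable_fst).add measurable_snd)).prodMk
      (measurable_snd.div (measurable_const.add measurable_snd))
  set d : ℝ × ℝ → ℝ := fun x => c * x.1 ^ (α₁ - 1) * x.2 ^ (α₂ - 1) * (1 + x.2) ^ β₁ *
      (1 + x.1 + x.2) ^ (-(α₁ + α₂ + α₃ + β₁ + β₂)) with hddef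
  set Q : Set (ℝ × ℝ) := Ioi (0:ℝ) ×ˢ Ioi (0:ℝ) with hQdef
  have hQ : MeasurableSet Q := measurableSet_Ioi.prod measurableSet_Ioi
  set G : ℝ × ℝ → ENNReal := fun x => ENNReal.ofReal (d x) with hGdef
  have hGmeas : Measurable G := by
    apply Measurable.ennreal_ofReal
    fun_prop
  -- the general formula
  have hform : ∀ s t : Set ℝ, MeasurableSet s → MeasurableSet t →
      μ (T ⁻¹' (s ×ˢ t)) =
        ENNReal.ofReal c *
          (∫⁻ y in Ioo 0 1 ∩ s, ENNReal.ofReal (y ^ (α₁-1) * (1-y) ^ (α₂+α₃+β₁+β₂-1))) *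
          (∫⁻ y in Ioo 0 1 ∩ t, ENNReal.ofReal (y ^ (α₂-1) * (1-y) ^ (α₃+β₂-1))) := by
    intro s t hs ht
    have hA : MeasurableSet (T ⁻¹' (s ×ˢ t)) := hT (hs.prod ht)
    set S₂ : Set ℝ := Ioi 0 ∩ (fun x => x / (1 + x)) ⁻¹' t with hS₂def
    have hS₂ : MeasurableSet S₂ :=
      measurableSet_Ioi.inter ((measurable_id.div (measurable_const.add measurable_id)) ht)
    set S₁ : ℝ → Set ℝ := fun x₂ => Ioi 0 ∩ (fun x => x / ((1 + x₂) + x)) ⁻¹' s with hS₁def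
    have hS₁ : ∀ x₂, MeasurableSet (S₁ x₂) := fun x₂ =>
      measurableSet_Ioi.inter ((measurable_id.div (measurable_const.add measurable_id)) hs)
    rw [hμ, withDensity_apply _ hA]
    have h1 : ∀ x, ENNReal.ofReal (Q.indicator d x) = (Q ∩ T ⁻¹' (s ×ˢ t)).indicator G x
        ∨ True := fun x => Or.inr trivial
    have step1 : ∫⁻ x in T ⁻¹' (s ×ˢ t), ENNReal.ofReal (Q.indicator d x) =
        ∫⁻ x, (Q ∩ T ⁻¹' (s ×ˢ t)).indicator G x := by
      have e : ∀ x, ENNReal.ofReal (Q.indicator d x) = Q.indicator G x := by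
        intro x
        rw [Set.indicator_apply, Set.indicator_apply]
        split_ifs <;> simp [hGdef]
      rw [lintegral_congr (fun x => e x), lintegral_indicator hQ _,
        Measure.restrict_restrict hQ, ← lintegral_indicator (hQ.inter hA) _]
    rw [step1]
    have hmeasInd : Measurable ((Q ∩ T ⁻¹' (s ×ˢ t)).indicator G) :=
      hGmeas.indicator (hQ.inter hA)
    rw [Measure.volume_eq_prod, lintegral_prod_symm' _ hmeasInd]
    -- split the indicator
    have hsplit : ∀ x₂ x₁ : ℝ, (Q ∩ T ⁻¹' (s ×ˢ t)).indicator G (x₁, x₂) =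
        S₂.indicator (fun x₂ => (S₁ x₂).indicator (fun x₁ => G (x₁, x₂)) x₁) x₂ := by
      intro x₂ x₁
      classical
      have harg : (1:ℝ) + x₂ + x₁ = 1 + x₁ + x₂ := by ring
      rw [Set.indicator_apply, Set.indicator_apply, Set.indicator_apply]
      by_cases hmem : (x₁, x₂) ∈ Q ∩ T ⁻¹' (s ×ˢ t)
      · obtain ⟨⟨hx₁, hx₂⟩, hpre⟩ := hmem
        have hps : x₁ / (1 + x₁ + x₂) ∈ s := hpre.1
        have hpt : x₂ / (1 + x₂) ∈ t := hpre.2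
        rw [if_pos ⟨⟨hx₁, hx₂⟩, hpre⟩, if_pos ⟨hx₂, hpt⟩, if_pos]
        exact ⟨hx₁, by simpa [harg] using hps⟩
      · rw [if_neg hmem]
        by_cases h2 : x₂ ∈ S₂
        · rw [if_pos h2]
          rw [if_neg]
          intro hc1
          exact hmem ⟨⟨hc1.1, h2.1⟩, ⟨by simpa [harg] using hc1.2, h2.2⟩⟩
        · rw [if_neg h2]
    simp_rw [hsplit]
    have step2 : ∀ x₂, (∫⁻ x₁, S₂.indicator
        (fun x₂ => (S₁ x₂).indicator (fun x₁ => G (x₁, x₂)) x₁) x₂) =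
        S₂.indicator (fun x₂ => ∫⁻ x₁ in S₁ x₂, G (x₁, x₂)) x₂ := by
      intro x₂
      by_cases h2 : x₂ ∈ S₂
      · simp only [Set.indicator_of_mem h2]
        exact lintegral_indicator (hS₁ x₂) _
      · simp [Set.indicator_of_notMem h2]
    simp_rw [step2]
    rw [lintegral_indicator hS₂ _]
    -- evaluate the inner integral on S₂
    have inner : ∀ x₂ ∈ S₂, (∫⁻ x₁ in S₁ x₂, G (x₁, x₂)) =
        (ENNReal.ofReal c *
          (∫⁻ y in Ioo 0 1 ∩ s, ENNReal.ofReal (y ^ (α₁-1) * (1-y) ^ (α₂+α₃+β₁+β₂-1)))) *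
        ENNReal.ofReal (x₂ ^ (α₂-1) * (1+x₂) ^ (-(α₂+(α₃+β₂)))) := by
      intro x₂ hx₂
      have hx₂0 : (0:ℝ) < x₂ := hx₂.1
      have hk : (0:ℝ) < 1 + x₂ := by linarith
      have e : ∀ x₁, G (x₁, x₂) =
          ENNReal.ofReal (c * x₂ ^ (α₂-1) * (1+x₂) ^ β₁) *
            ENNReal.ofReal (x₁ ^ (α₁-1) *
              ((1+x₂) + x₁) ^ (-(α₁ + (α₂+α₃+β₁+β₂)))) := by
        intro x₁
        have hd2 : d (x₁, x₂) = (c * x₂ ^ (α₂-1) * (1+x₂) ^ β₁) *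
            (x₁ ^ (α₁-1) * ((1+x₂) + x₁) ^ (-(α₁ + (α₂+α₃+β₁+β₂)))) := by
          show c * x₁ ^ (α₁-1) * x₂ ^ (α₂-1) * (1+x₂) ^ β₁ *
              (1+x₁+x₂) ^ (-(α₁+α₂+α₃+β₁+β₂)) = _
          rw [show (1:ℝ)+x₁+x₂ = (1+x₂)+x₁ by ring,
            show -(α₁+α₂+α₃+β₁+β₂) = -(α₁+(α₂+α₃+β₁+β₂)) by ring]
          ring
        show ENNReal.ofReal (d (x₁, x₂)) = _
        rw [hd2, ENNReal.ofReal_mul (by positivity)]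
      simp_rw [e]
      rw [lintegral_const_mul' _ _ ENNReal.ofReal_ne_top]
      have := subst_lemma (a := α₁) (b := α₂+α₃+β₁+β₂) hk hs
      rw [hS₁def]
      simp only []
      rw [this]
      rw [← mul_assoc, ← ENNReal.ofReal_mul (by positivity)]
      have hcomb : c * x₂ ^ (α₂-1) * (1+x₂) ^ β₁ * (1+x₂) ^ (-(α₂+α₃+β₁+β₂)) =
          c * (x₂ ^ (α₂-1) * (1+x₂) ^ (-(α₂+(α₃+β₂)))) := by
        rw [mul_assoc, mul_assoc, ← Real.rpow_add hk]
        congr 2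
        · congr 1
          ring
      rw [hcomb, ENNReal.ofReal_mul hc.le]
      ring
    rw [setLIntegral_congr_fun hS₂ inner]
    rw [lintegral_const_mul' _ _ (by
      exact ENNReal.mul_ne_top ENNReal.ofReal_ne_top (by
        refine (lt_of_le_of_lt (lintegral_mono_set (inter_subset_left)) ?_).ne
        rw [beta_lintegral h₁ h₃]
        exact ENNReal.ofReal_lt_top))]
    have := subst_lemma (a := α₂) (b := α₃+β₂) (one_pos) ht
    rw [hS₂def]
    rw [this, Real.one_rpow, ENNReal.ofReal_one, one_mul]
  -- constant identity from hprob
  set B₁ : ℝ := Gamma α₁ * Gamma (α₂+α₃+β₁+β₂) / Gamma (α₁ + (α₂+α₃+β₁+β₂)) with hB₁def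
  set B₂ : ℝ := Gamma α₂ * Gamma (α₃+β₂) / Gamma (α₂ + (α₃+β₂)) with hB₂def
  have hB₁pos : (0:ℝ) < B₁ :=
    div_pos (mul_pos (Gamma_pos_of_pos h₁) (Gamma_pos_of_pos h₃))
      (Gamma_pos_of_pos (by linarith))
  have hB₂pos : (0:ℝ) < B₂ :=
    div_pos (mul_pos (Gamma_pos_of_pos h₂) (Gamma_pos_of_pos h₄))
      (Gamma_pos_of_pos (by linarith))
  have huniv := hform univ univ MeasurableSet.univ MeasurableSet.univ
  simp only [Set.univ_prod_univ, Set.preimage_univ, Set.inter_univ] at huniv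
  rw [beta_lintegral h₁ h₃, beta_lintegral h₂ h₄] at huniv
  have hone : μ univ = 1 := hprob.measure_univ
  rw [hone] at huniv
  have hceq : c * B₁ * B₂ = 1 := by
    rw [← ENNReal.ofReal_mul hc.le, ← ENNReal.ofReal_mul (by positivity)] at huniv
    have := huniv.symm
    rwa [ENNReal.ofReal_eq_one] at this
  have hcval : c = B₁⁻¹ * B₂⁻¹ := by
    field_simp
    linarith [hceq]
  -- conclude via rectangles
  refine (Measure.prod_eq ?_).symm
  intro s t hs ht
  rw [Measure.map_apply hT (hs.prod ht), hform s t hs ht,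
    betaMeasure_apply h₁ h₃ hs, betaMeasure_apply h₂ h₄ ht]
  rw [hcval, ENNReal.ofReal_mul (by positivity)]
  ring
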